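/- For n ≥ 2, let e_1,…,e_n be an orthonormal basis of an n-dimensional complex Hilbert space H and let |φ⟩ = e_1 ∧ e_2 ∧ ⋯ ∧ e_n ∈ H^{⊗n} be the (unit) antisymmetrized basis tensor. For i ∈ {1,…,n} and k ∈ {1,…,n}, let |k⟩_i|φ⟩_{ī} ∈ H^{⊗(n+1)} denote the vector having e_k in the i-th tensor factor and the n factors of |φ⟩ distributed in order over the remaining n factors. Then for i ≠ j, the inner product ⟨ (e_k)_i, φ_{ī} | (e_l)_j, φ_{j̄} ⟩ = (−1)^{i−j+1} · δ_{k,l} / n, while for i = j it equals δ_{k,l}. -/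

import Mathlib

open scoped BigOperators ComplexOrder ComplexInnerProductSpace

noncomputable section

/-- `H`, a model of an `m`-dimensional complex Hilbert space. -/
abbrev Hsp (m : ℕ) : Type := EuclideanSpace ℂ (Fin m)
/-- `H^{⊗n}`, a model of the `n`-fold tensor power of `H`. -/
abbrev Tpow (m n : ℕ) : Type := EuclideanSpace ℂ (Fin n → Fin m)

/-- The product vector `φ₁ ⊗ ⋯ ⊗ φₙ` in `H^{⊗n}`. -/
def prodVec {m n : ℕ} (φ : Fin n → Hsp m) : Tpow m n :=
  WithLp.toLp 2 (fun ω => ∏ i, φ i (ω i))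

/-- The antisymmetric tensor product
`φ₁ ∧ ⋯ ∧ φₙ = (1/√(n!)) Σ_{σ ∈ Sₙ} sgn(σ) φ_{σ(1)} ⊗ ⋯ ⊗ φ_{σ(n)}`. -/
def wedge {m n : ℕ} (φ : Fin n → Hsp m) : Tpow m n :=
  ((Real.sqrt n.factorial : ℂ))⁻¹ •
    ∑ σ : Equiv.Perm (Fin n), ((Equiv.Perm.sign σ : ℤ) : ℂ) • prodVec (fun i => φ (σ i))

/-- The antisymmetric subspace `∧ⁿ H` of `H^{⊗n}`: the span of all antisymmetric
tensor products. -/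
def antisymSub (m n : ℕ) : Submodule ℂ (Tpow m n) :=
  Submodule.span ℂ (Set.range (fun φ : Fin n → Hsp m => wedge φ))

/-- The orthogonal projector `Φ(n)` of `H^{⊗n}` onto the antisymmetric subspace `∧ⁿ H`. -/
def asProj (m n : ℕ) : Tpow m n →L[ℂ] Tpow m n :=
  (antisymSub m n).subtypeL.comp ((antisymSub m n).orthogonalProjectionOnto)

/-- The vector of `H^{⊗(n+1)}` having `x` in tensor slot `p` and the vector
`v ∈ H^{⊗n}` distributed in order over the remaining `n` slots. -/
def embedAt {m n : ℕ} (p : Fin (n+1)) (x : Hsp m) (v : Tpow m n) : Tpow m (n+1) :=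
  WithLp.toLp 2 (fun ω => x (ω p) * v (fun j => ω (p.succAbove j)))

open Finset Equiv Equiv.Perm

lemma inner_prodVec {m N : ℕ} (φ ψ : Fin N → Hsp m) :
    ⟪prodVec φ, prodVec ψ⟫ = ∏ q, ⟪φ q, ψ q⟫ := by
  have h1 : ∀ q : Fin N, ⟪φ q, ψ q⟫ = ∑ a : Fin m, (starRingEnd ℂ) (φ q a) * ψ q a := fun q => by
    simp [PiLp.inner_apply, RCLike.inner_apply, mul_comm]
  simp only [h1]
  rw [Finset.prod_univ_sum, Fintype.piFinset_univ]
  simp [prodVec, PiLp.inner_apply, RCLike.inner_apply, map_prod, Finset.prod_mul_distrib, mul_comm]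

lemma comp_insertNth {N : ℕ} {α β : Type*} (g : α → β) (p : Fin (N+1)) (x : α) (f : Fin N → α) :
    Fin.insertNth (α := fun _ => β) p (g x) (fun t => g (f t)) = fun r => g (Fin.insertNth (α := fun _ => α) p x f r) := by
  funext r
  refine Fin.succAboveCases p ?_ ?_ r <;> simp

lemma embedAt_prodVec {m N : ℕ} (p : Fin (N+1)) (x : Hsp m) (φ : Fin N → Hsp m) :
    embedAt p x (prodVec φ) = prodVec (Fin.insertNth (α := fun _ => Hsp m) p x φ) := by
  ext ω
  show x (ω p) * ∏ t, φ t (ω (p.succAbove t)) = ∏ q, Fin.insertNth (α := fun _ => Hsp m) p x φ q (ω q)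
  rw [Fin.prod_univ_succAbove (fun q => Fin.insertNth (α := fun _ => Hsp m) p x φ q (ω q)) p]
  simp

def embedAtL {m N : ℕ} (p : Fin (N+1)) (x : Hsp m) : Tpow m N →ₗ[ℂ] Tpow m (N+1) where
  toFun := embedAt p x
  map_add' v w := by ext ω; simp [embedAt, mul_add]
  map_smul' c v := by ext ω; simp [embedAt]; ring

lemma embedAt_wedge {m N : ℕ} (p : Fin (N+1)) (x : Hsp m) (e : Fin N → Hsp m) :
    embedAt p x (wedge e) = ((Real.sqrt N.factorial : ℂ))⁻¹ •
      ∑ σ : Perm (Fin N), ((sign σ : ℤ) : ℂ) • prodVec (Fin.insertNth (α := fun _ => Hsp m) p x (fun t => e (σ t))) := by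
  have : embedAt p x (wedge e) = embedAtL p x (wedge e) := rfl
  rw [this, wedge, map_smul, map_sum]
  simp only [map_smul]
  congr 1
  refine Finset.sum_congr rfl fun σ _ => ?_
  congr 1
  exact embedAt_prodVec p x _

lemma inner_embed_wedge {m N : ℕ} (e : Fin N → Hsp m) (he : Orthonormal ℂ e)
    (p q : Fin (N+1)) (k l : Fin N) :
    ⟪embedAt p (e k) (wedge e), embedAt q (e l) (wedge e)⟫
      = ((N.factorial : ℂ))⁻¹ * ∑ σ : Perm (Fin N), ∑ τ : Perm (Fin N),
          ((sign σ : ℤ) : ℂ) * ((sign τ : ℤ) : ℂ) *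
            (if Fin.insertNth (α := fun _ => Fin N) p k ⇑σ
                = Fin.insertNth (α := fun _ => Fin N) q l ⇑τ then 1 else 0) := by
  have huv : ∀ (σ τ : Perm (Fin N)),
      ⟪prodVec (Fin.insertNth (α := fun _ => Hsp m) p (e k) (fun t => e (σ t))),
       prodVec (Fin.insertNth (α := fun _ => Hsp m) q (e l) (fun t => e (τ t)))⟫
      = (if Fin.insertNth (α := fun _ => Fin N) p k ⇑σ
            = Fin.insertNth (α := fun _ => Fin N) q l ⇑τ then (1:ℂ) else 0) := by
    intro σ τ
    rw [show Fin.insertNth (α := fun _ => Hsp m) p (e k) (fun t => e (σ t))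
          = fun r => e (Fin.insertNth (α := fun _ => Fin N) p k ⇑σ r) from comp_insertNth e p k ⇑σ]
    rw [show Fin.insertNth (α := fun _ => Hsp m) q (e l) (fun t => e (τ t))
          = fun r => e (Fin.insertNth (α := fun _ => Fin N) q l ⇑τ r) from comp_insertNth e q l ⇑τ]
    rw [inner_prodVec]
    simp only [orthonormal_iff_ite.mp he]
    rw [Finset.prod_boole]
    have hiff : (∀ r ∈ Finset.univ, Fin.insertNth (α := fun _ => Fin N) p k ⇑σ r
        = Fin.insertNth (α := fun _ => Fin N) q l ⇑τ r)
        ↔ Fin.insertNth (α := fun _ => Fin N) p k ⇑σ = Fin.insertNth (α := fun _ => Fin N) q l ⇑τ := by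
      simp [funext_iff]
    simp only [hiff]
  rw [embedAt_wedge, embedAt_wedge]
  rw [inner_smul_left, inner_smul_right, sum_inner]
  simp only [inner_sum, inner_smul_left, inner_smul_right, huv, map_intCast]
  have hcc : (starRingEnd ℂ) ((Real.sqrt N.factorial : ℂ))⁻¹ * ((Real.sqrt N.factorial : ℂ))⁻¹
      = ((N.factorial : ℂ))⁻¹ := by
    rw [← Complex.ofReal_inv, Complex.conj_ofReal, ← Complex.ofReal_mul, ← mul_inv,
      Real.mul_self_sqrt (by positivity)]
    push_cast
    ring
  rw [← hcc]
  simp only [Finset.mul_sum]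
  refine Finset.sum_congr rfl fun σ _ => Finset.sum_congr rfl fun τ _ => ?_
  ring

lemma sum_same {N : ℕ} (p : Fin (N+1)) (k l : Fin N) :
    (∑ σ : Perm (Fin N), ∑ τ : Perm (Fin N), ((sign σ : ℤ) : ℂ) * ((sign τ : ℤ) : ℂ) *
      (if Fin.insertNth (α := fun _ => Fin N) p k ⇑σ
          = Fin.insertNth (α := fun _ => Fin N) p l ⇑τ then 1 else 0))
    = if k = l then (N.factorial : ℂ) else 0 := by
  have hcond : ∀ σ τ : Perm (Fin N),
      (Fin.insertNth (α := fun _ => Fin N) p k ⇑σ = Fin.insertNth (α := fun _ => Fin N) p l ⇑τ)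
      ↔ (k = l ∧ σ = τ) := by
    intro σ τ
    constructor
    · intro h
      have h1 := congrFun h p
      simp only [Fin.insertNth_apply_same] at h1
      refine ⟨h1, ?_⟩
      ext t
      have h2 := congrFun h (p.succAbove t)
      simp only [Fin.insertNth_apply_succAbove] at h2
      exact congrArg Fin.val h2
    · rintro ⟨rfl, rfl⟩; rfl
  simp only [hcond]
  by_cases hkl : k = l
  · simp only [hkl, true_and, if_pos rfl]
    have hτ : ∀ σ : Perm (Fin N),
        (∑ τ : Perm (Fin N), ((sign σ : ℤ) : ℂ) * ((sign τ : ℤ) : ℂ) *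
          (if σ = τ then 1 else 0)) = 1 := by
      intro σ
      rw [Finset.sum_eq_single σ]
      · rw [if_pos rfl, mul_one, ← Int.cast_mul, ← Units.val_mul, Int.units_mul_self]
        simp
      · intro τ _ hτ; rw [if_neg (fun hh => hτ hh.symm), mul_zero]
      · intro h; exact absurd (Finset.mem_univ σ) h
    simp only [hτ, Finset.sum_const, Finset.card_univ, Fintype.card_perm, Fintype.card_fin,
      nsmul_eq_mul, mul_one]
    simp
  · simp [hkl]

lemma card_fixval {N : ℕ} (t₀ l : Fin (N+1)) :
    (Finset.univ.filter (fun σ : Perm (Fin (N+1)) => σ t₀ = l)).card = N.factorial := by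
  classical
  have hcard : ∀ v w : Fin (N+1),
      (Finset.univ.filter fun σ : Perm (Fin (N+1)) => σ t₀ = v).card
      = (Finset.univ.filter fun σ : Perm (Fin (N+1)) => σ t₀ = w).card := by
    intro v w
    apply Finset.card_bij (fun σ _ => Equiv.swap v w * σ)
    · intro σ hσ
      simp only [Finset.mem_filter, Finset.mem_univ, true_and] at *
      rw [Perm.mul_apply, hσ, Equiv.swap_apply_left]
    · intro a _ b _ h; exact mul_left_cancel h
    · intro τ hτ
      simp only [Finset.mem_filter, Finset.mem_univ, true_and] at hτ
      refine ⟨Equiv.swap v w * τ, ?_, ?_⟩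
      · simp only [Finset.mem_filter, Finset.mem_univ, true_and, Perm.mul_apply, hτ,
          Equiv.swap_apply_right]
      · rw [← mul_assoc, Equiv.swap_mul_self, one_mul]
  have hpart : (Finset.univ : Finset (Perm (Fin (N+1)))).card
      = ∑ v : Fin (N+1), (Finset.univ.filter fun σ : Perm (Fin (N+1)) => σ t₀ = v).card :=
    Finset.card_eq_sum_card_fiberwise (fun σ _ => Finset.mem_univ (σ t₀))
  have h2 : (N+1).factorial = (N+1) * (Finset.univ.filter fun σ : Perm (Fin (N+1)) => σ t₀ = l).card := by
    have hpartc : (N+1).factorial = ∑ v : Fin (N+1),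
        (Finset.univ.filter fun σ : Perm (Fin (N+1)) => σ t₀ = v).card := by
      rw [← hpart, Finset.card_univ, Fintype.card_perm, Fintype.card_fin]
    rw [hpartc]
    trans ∑ _v : Fin (N+1), (Finset.univ.filter fun σ : Perm (Fin (N+1)) => σ t₀ = l).card
    · exact Finset.sum_congr rfl fun v _ => hcard v l
    · simp [mul_comm]
  have h3 : (N+1) * N.factorial = (N+1) * (Finset.univ.filter fun σ : Perm (Fin (N+1)) => σ t₀ = l).card := by
    rw [← Nat.factorial_succ]; exact h2
  exact (Nat.eq_of_mul_eq_mul_left (Nat.succ_pos N) h3).symm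

lemma insertNth_eq_cons_comp {N : ℕ} {α : Type*} (p : Fin (N+1)) (x : α) (f : Fin N → α) :
    Fin.insertNth (α := fun _ => α) p x f = fun r => Fin.cons (α := fun _ => α) x f (p.cycleRange r) := by
  funext r
  refine Fin.succAboveCases p ?_ ?_ r
  · simp [Fin.cycleRange_self]
  · intro t; simp [Fin.cycleRange_succAbove]

lemma sum_ne {M : ℕ} (p q : Fin (M+1+1)) (hpq : p ≠ q) (k l : Fin (M+1)) :
    (∑ σ : Perm (Fin (M+1)), ∑ τ : Perm (Fin (M+1)), ((sign σ : ℤ) : ℂ) * ((sign τ : ℤ) : ℂ) *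
      (if Fin.insertNth (α := fun _ => Fin (M+1)) p k ⇑σ
          = Fin.insertNth (α := fun _ => Fin (M+1)) q l ⇑τ then 1 else 0))
    = if k = l then ((-1 : ℂ) ^ (p.val + q.val + 1) * (M.factorial : ℕ)) else 0 := by
  classical
  set ρ : Perm (Fin (M+1+1)) := p.cycleRange * (q.cycleRange)⁻¹ with hρ
  have hz : ρ 0 ≠ 0 := by
    intro h
    rw [hρ, Perm.mul_apply] at h
    have hq0 : (q.cycleRange)⁻¹ 0 = q := by
      rw [Perm.inv_eq_iff_eq]; exact (Fin.cycleRange_self q).symm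
    rw [hq0] at h
    have hp0 : p.cycleRange p = 0 := Fin.cycleRange_self p
    exact hpq (p.cycleRange.injective (hp0.trans h.symm))
  set z : Fin (M+1+1) := ρ 0 with hz0
  set t₀ : Fin (M+1) := z.pred hz with ht₀
  have hzt : t₀.succ = z := Fin.succ_pred z hz
  set D : Perm (Fin (M+1+1)) := Equiv.swap 0 z * ρ with hD
  have hD0 : D 0 = 0 := by rw [hD, Perm.mul_apply, ← hz0]; exact Equiv.swap_apply_right 0 z
  set d : Perm (Fin (M+1)) := (Equiv.Perm.decomposeFin D).2 with hd
  have hD' : D = Equiv.Perm.decomposeFin.symm ((Equiv.Perm.decomposeFin D).1, d) := by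
    rw [hd]; simp
  have hfst : (Equiv.Perm.decomposeFin D).1 = 0 := by
    have h := Equiv.Perm.decomposeFin_symm_apply_zero (Equiv.Perm.decomposeFin D).1 d
    rw [← hD'] at h
    rw [← h]; exact hD0
  have hDd : D = Equiv.Perm.decomposeFin.symm (0, d) := by rw [← hfst]; exact hD'
  have hDsucc : ∀ t : Fin (M+1), D t.succ = (d t).succ := by
    intro t; rw [hDd, Equiv.Perm.decomposeFin_symm_apply_succ]; simp
  have key : ∀ (σ : Perm (Fin (M+1))), k = σ t₀ → ∀ t : Fin (M+1),
      Fin.cons (α := fun _ => Fin (M+1)) k ⇑σ (ρ t.succ) = σ (d t) := by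
    intro σ hk t
    have hds : (d t).succ = Equiv.swap 0 z (ρ t.succ) := by
      rw [← hDsucc, hD]; rfl
    rcases Fin.eq_zero_or_eq_succ (ρ t.succ) with h' | ⟨s, h'⟩
    · rw [h'] at hds ⊢
      rw [Equiv.swap_apply_left] at hds
      have hdt : d t = t₀ := Fin.succ_injective _ (hds.trans hzt.symm)
      rw [hdt, Fin.cons_zero, hk]
    · have hs0 : (s.succ : Fin (M+1+1)) ≠ 0 := Fin.succ_ne_zero s
      have hsz : (s.succ : Fin (M+1+1)) ≠ z := by
        intro hc
        have hcc : ρ t.succ = ρ 0 := by rw [h', hc, hz0]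
        exact Fin.succ_ne_zero t (ρ.injective hcc)
      rw [h'] at hds ⊢
      rw [Equiv.swap_apply_of_ne_of_ne hs0 hsz] at hds
      have hdt : d t = s := Fin.succ_injective _ hds
      rw [Fin.cons_succ, hdt]
  have hconv : ∀ σ τ : Perm (Fin (M+1)),
      (Fin.insertNth (α := fun _ => Fin (M+1)) p k ⇑σ = Fin.insertNth (α := fun _ => Fin (M+1)) q l ⇑τ)
      ↔ ∀ s : Fin (M+1+1), Fin.cons (α := fun _ => Fin (M+1)) l ⇑τ s
          = Fin.cons (α := fun _ => Fin (M+1)) k ⇑σ (ρ s) := by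
    intro σ τ
    rw [insertNth_eq_cons_comp, insertNth_eq_cons_comp, funext_iff]
    constructor
    · intro h s
      have h1 := h ((q.cycleRange)⁻¹ s)
      rw [show q.cycleRange ((q.cycleRange)⁻¹ s) = s from Perm.eq_inv_iff_eq.mp rfl] at h1
      rw [hρ, Perm.mul_apply]
      exact h1.symm
    · intro h r
      have h1 := h (q.cycleRange r)
      rw [hρ, Perm.mul_apply, show (q.cycleRange)⁻¹ (q.cycleRange r) = r from Perm.inv_eq_iff_eq.mpr rfl] at h1
      exact h1.symm
  have hiff : ∀ σ τ : Perm (Fin (M+1)),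
      (Fin.insertNth (α := fun _ => Fin (M+1)) p k ⇑σ = Fin.insertNth (α := fun _ => Fin (M+1)) q l ⇑τ)
      ↔ (k = l ∧ σ t₀ = l ∧ τ = σ * d) := by
    intro σ τ
    rw [hconv]
    constructor
    · intro h
      have h0 := h 0
      rw [Fin.cons_zero, ← hz0, ← hzt, Fin.cons_succ] at h0
      have hστ : σ t₀ = l := h0.symm
      obtain ⟨t, ht⟩ := τ.surjective l
      have h1 := h t.succ
      rw [Fin.cons_succ, ht] at h1
      have hk : k = l := by
        rcases Fin.eq_zero_or_eq_succ (ρ t.succ) with h' | ⟨s, h'⟩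
        · rw [h', Fin.cons_zero] at h1; exact h1.symm
        · rw [h', Fin.cons_succ] at h1
          have hs : s = t₀ := σ.injective ((h1.symm.trans hστ.symm).symm).symm
          exfalso
          have hcc : ρ t.succ = ρ 0 := by rw [h', hs, hzt, hz0]
          exact Fin.succ_ne_zero t (ρ.injective hcc)
      refine ⟨hk, hστ, ?_⟩
      apply Equiv.ext; intro t'
      have h2 := h t'.succ
      rw [Fin.cons_succ] at h2
      rw [Perm.mul_apply, h2]
      exact key σ (by rw [hk, ← hστ]) t'
    · rintro ⟨hk, hστ, rfl⟩
      intro s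
      rcases Fin.eq_zero_or_eq_succ s with rfl | ⟨t, rfl⟩
      · rw [Fin.cons_zero, ← hz0, ← hzt, Fin.cons_succ]
        exact hστ.symm
      · rw [Fin.cons_succ, Perm.mul_apply]
        exact (key σ (by rw [hk, ← hστ]) t).symm
  have hsgn : ((sign d : ℤ) : ℂ) = (-1 : ℂ) ^ (p.val + q.val + 1) := by
    have h1 : sign d = sign D := by
      rw [hDd, Equiv.Perm.decomposeFin.symm_sign]; simp
    rw [h1, hD, map_mul, hρ, map_mul, map_inv, Equiv.Perm.sign_swap (Ne.symm hz),
      Fin.sign_cycleRange, Fin.sign_cycleRange]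
    simp only [Units.val_mul, Int.cast_mul, Units.val_neg, Units.val_one, Int.cast_neg,
      Int.cast_one, Units.val_pow_eq_pow_val, inv_pow, Units.val_inv_eq_inv_val]
    rw [pow_add, pow_one]
    norm_num
    ring
  have hτsum : ∀ σ : Perm (Fin (M+1)),
      (∑ τ : Perm (Fin (M+1)), ((sign σ : ℤ) : ℂ) * ((sign τ : ℤ) : ℂ) *
        (if Fin.insertNth (α := fun _ => Fin (M+1)) p k ⇑σ
            = Fin.insertNth (α := fun _ => Fin (M+1)) q l ⇑τ then 1 else 0))
      = if σ t₀ = l ∧ k = l then ((sign σ : ℤ) : ℂ) * ((sign (σ * d) : ℤ) : ℂ) else 0 := by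
    intro σ
    simp only [hiff]
    by_cases hc : k = l ∧ σ t₀ = l
    · rw [if_pos ⟨hc.2, hc.1⟩]
      rw [Finset.sum_eq_single (σ * d)]
      · rw [if_pos ⟨hc.1, hc.2, rfl⟩, mul_one]
      · intro τ _ hτ; rw [if_neg (fun hh => hτ hh.2.2), mul_zero]
      · intro h; exact absurd (Finset.mem_univ _) h
    · rw [if_neg (fun hh => hc ⟨hh.2, hh.1⟩)]
      apply Finset.sum_eq_zero; intro τ _
      rw [if_neg (fun hh => hc ⟨hh.1, hh.2.1⟩), mul_zero]
  have hterm : ∀ σ : Perm (Fin (M+1)),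
      ((sign σ : ℤ) : ℂ) * ((sign (σ * d) : ℤ) : ℂ) = ((sign d : ℤ) : ℂ) := by
    intro σ
    rw [map_mul, Units.val_mul, Int.cast_mul, ← mul_assoc, ← Int.cast_mul, ← Units.val_mul,
      Int.units_mul_self, Units.val_one, Int.cast_one, one_mul]
  rw [Finset.sum_congr rfl fun σ _ => hτsum σ]
  by_cases hkl : k = l
  · rw [if_pos hkl]
    have hone : ∀ σ : Perm (Fin (M+1)),
        (if σ t₀ = l ∧ k = l then ((sign σ : ℤ) : ℂ) * ((sign (σ * d) : ℤ) : ℂ) else 0)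
        = if σ t₀ = l then ((sign d : ℤ) : ℂ) else 0 := by
      intro σ; by_cases h : σ t₀ = l
      · rw [if_pos ⟨h, hkl⟩, if_pos h, hterm]
      · rw [if_neg (fun hh => h hh.1), if_neg h]
    rw [Finset.sum_congr rfl fun σ _ => hone σ]
    rw [Finset.sum_ite, Finset.sum_const, Finset.sum_const_zero, add_zero, card_fixval,
      nsmul_eq_mul, hsgn]
    ring
  · rw [if_neg hkl]
    apply Finset.sum_eq_zero; intro σ _
    rw [if_neg (fun hh => hkl hh.2)]


/- STATEMENT 12: For an orthonormal basis e₁, …, eₙ of an n-dimensional space H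
(n ≥ 2) and φ = e₁ ∧ ⋯ ∧ eₙ, the vectors |k⟩_i|φ⟩_{ī} ∈ H^{⊗(n+1)} satisfy
⟨(e_k)_i, φ_{ī} | (e_l)_j, φ_{j̄}⟩ = δ_{kl} if i = j, and (−1)^{i−j+1} δ_{kl} / n
if i ≠ j (here i, j ∈ {1, …, n} label program-register slots). -/
theorem inner_embed_wedge_basis
    (n : ℕ) (hn : 2 ≤ n) (e : Fin n → Hsp n) (he : Orthonormal ℂ e)
    (i j : Fin n) (k l : Fin n) :
    ⟪embedAt i.castSucc (e k) (wedge e), embedAt j.castSucc (e l) (wedge e)⟫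
      = if i = j then (if k = l then (1 : ℂ) else 0)
        else (-1 : ℂ) ^ (i.val + j.val + 1) * (if k = l then (1 : ℂ) else 0) / n := by
  obtain ⟨M, rfl⟩ : ∃ M, n = M + 1 := ⟨n - 1, by omega⟩
  rw [inner_embed_wedge e he]
  by_cases hij : i = j
  · subst hij
    rw [sum_same, if_pos rfl]
    by_cases hkl : k = l
    · rw [if_pos hkl, if_pos hkl]
      exact inv_mul_cancel₀ (Nat.cast_ne_zero.mpr (Nat.factorial_ne_zero (M+1)))
    · rw [if_neg hkl, if_neg hkl, mul_zero]
  · have hpq : i.castSucc ≠ j.castSucc := fun h => hij (Fin.castSucc_injective _ h)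
    rw [sum_ne _ _ hpq, if_neg hij]
    by_cases hkl : k = l
    · rw [if_pos hkl, if_pos hkl, mul_one]
      simp only [Fin.coe_castSucc]
      have hfac : ((M+1).factorial : ℂ) = ((M:ℂ)+1) * (M.factorial : ℂ) := by
        rw [Nat.factorial_succ]; push_cast; ring
      rw [hfac]
      have h1 : (M.factorial : ℂ) ≠ 0 := Nat.cast_ne_zero.mpr (Nat.factorial_ne_zero M)
      have h2 : ((M:ℂ) + 1) ≠ 0 := by
        have := Nat.cast_ne_zero (R := ℂ).mpr (Nat.succ_ne_zero M)
        push_cast at this; exact this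
      have h3 : ((M+1 : ℕ) : ℂ) = (M:ℂ) + 1 := by push_cast; ring
      rw [h3]
      field_simp
    · rw [if_neg hkl, if_neg hkl, mul_zero, mul_zero, zero_div]
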